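/- Let L be a code loop and let B and B₁ be two bases of L. Then the groups H_B(L) and H_{B₁}(L) of half-automorphisms fixing every element of B, respectively every element of B₁, have the same cardinality and are isomorphic as groups. -/

import Mathlib

/-- A loop: a binary operation with two-sided identity in which left and right
translations are bijections (equivalently, equations `a·x = b` and `y·a = b`
have unique solutions). -/
structure LoopStr (α : Type*) where
  mul : α → α → α
  one : α
  one_mul : ∀ x, mul one x = x
  mul_one : ∀ x, mul x one = x
  mulLeft_bij : ∀ a, Function.Bijective (fun x => mul a x)
  mulRight_bij : ∀ a, Function.Bijective (fun x => mul x a)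

namespace LoopStr

variable {α : Type*} (S : LoopStr α)

/-- A subset containing `1` and closed under multiplication and (left and right) inverses. -/
def IsClosed (T : Set α) : Prop :=
  S.one ∈ T ∧ (∀ x ∈ T, ∀ y ∈ T, S.mul x y ∈ T) ∧
    (∀ x ∈ T, ∀ y, S.mul x y = S.one → y ∈ T) ∧
    (∀ x ∈ T, ∀ y, S.mul y x = S.one → y ∈ T)

/-- The subloop generated by a set: the smallest closed subset containing it. -/
def gen (X : Set α) : Set α := ⋂₀ {T | X ⊆ T ∧ S.IsClosed T}

def Generates (X : Set α) : Prop := S.gen X = Set.univ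

/-- A basis: a minimal generating set. -/
def IsBasis (X : Set α) : Prop := S.Generates X ∧ ∀ Y ⊂ X, ¬ S.Generates Y

def IsHalfAut (f : α → α) : Prop :=
  Function.Bijective f ∧
    ∀ x y, f (S.mul x y) = S.mul (f x) (f y) ∨ f (S.mul x y) = S.mul (f y) (f x)

def IsAut (f : α → α) : Prop :=
  Function.Bijective f ∧ ∀ x y, f (S.mul x y) = S.mul (f x) (f y)

def IsAntiAut (f : α → α) : Prop :=
  Function.Bijective f ∧ ∀ x y, f (S.mul x y) = S.mul (f y) (f x)

/-- The commutant of a loop. -/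
def commutant : Set α := {c | ∀ x, S.mul c x = S.mul x c}

/-- The nucleus of a loop. -/
def nucleus : Set α :=
  {a | ∀ u v, S.mul (S.mul a u) v = S.mul a (S.mul u v) ∧
        S.mul (S.mul u a) v = S.mul u (S.mul a v) ∧
        S.mul (S.mul u v) a = S.mul u (S.mul v a)}

end LoopStr

/-- A code loop: a finite Moufang loop with a unique nontrivial square `neg` (written `-1`),
which (by Chein–Goodaire) is central of order 2, and all squares, commutators and
associators lie in `{1, neg}`. -/
structure CodeLoop (α : Type*) extends LoopStr α where
  finite : Finite α
  moufang : ∀ x y z, mul (mul x (mul z x)) y = mul x (mul z (mul x y))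
  neg : α
  neg_ne_one : neg ≠ one
  neg_is_square : ∃ x, mul x x = neg
  square_unique : ∀ m, m ≠ one → (∃ x, mul x x = m) → m = neg
  neg_mul_comm : ∀ x, mul neg x = mul x neg
  neg_mul_assoc₁ : ∀ x y, mul (mul neg x) y = mul neg (mul x y)
  neg_mul_assoc₂ : ∀ x y, mul (mul x neg) y = mul x (mul neg y)
  neg_mul_assoc₃ : ∀ x y, mul (mul x y) neg = mul x (mul y neg)
  neg_neg : mul neg neg = one
  square_mem : ∀ x, mul x x = one ∨ mul x x = neg
  comm_mem : ∀ x y, mul x y = mul y x ∨ mul x y = mul (mul y x) neg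
  assoc_mem : ∀ x y z, mul (mul x y) z = mul x (mul y z) ∨
      mul (mul x y) z = mul (mul x (mul y z)) neg

/-- The left-normed product `a_σ` of the basis elements indexed by `σ`, in increasing order. -/
def aSig {α : Type*} (S : LoopStr α) {n : ℕ} (a : Fin n → α) (σ : Finset (Fin n)) : α :=
  ((σ.sort (· ≤ ·)).map a).foldl S.mul S.one


namespace CodeLoopAux

variable {α : Type*} (C : CodeLoop α)

lemma lcancel {a x y : α} (h : C.mul a x = C.mul a y) : x = y := (C.mulLeft_bij a).1 h
lemma rcancel {a x y : α} (h : C.mul x a = C.mul y a) : x = y := (C.mulRight_bij a).1 h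

lemma nn (x : α) : C.mul C.neg (C.mul C.neg x) = x := by
  rw [← C.neg_mul_assoc₁, C.neg_neg, C.one_mul]

lemma mul_neg_right (x y : α) : C.mul x (C.mul C.neg y) = C.mul C.neg (C.mul x y) := by
  rw [C.neg_mul_comm y, ← C.neg_mul_assoc₃, C.neg_mul_comm]

lemma neg_mul_ne (x : α) : C.mul C.neg x ≠ x := by
  intro h
  apply C.neg_ne_one
  apply rcancel C (a := x)
  rw [h, C.one_mul]

lemma inv_symm {x y : α} (h : C.mul x y = C.one) : C.mul y x = C.one := by
  rcases C.comm_mem y x with hc | hc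
  · rw [hc, h]
  · -- y x = (x y) n = 1 · n = n ; use moufang to contradict
    exfalso
    have hyx : C.mul y x = C.neg := by rw [hc, h, C.one_mul]
    have hm := C.moufang x y y
    -- (x (y x)) y = x (y (x y))
    rw [hyx, h, C.mul_one] at hm
    rw [C.neg_mul_assoc₂, mul_neg_right, h, C.mul_one] at hm
    exact C.neg_ne_one hm

lemma exists_right_inv (x : α) : ∃ y, C.mul x y = C.one := (C.mulLeft_bij x).2 C.one

end CodeLoopAux

namespace CodeLoopAux

variable {α : Type*} (C : CodeLoop α)

/-- The sign equivalence: `x ≈ y` iff `y ∈ {x, -x}`. -/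
def sr : Setoid α where
  r x y := y = x ∨ y = C.mul C.neg x
  iseqv := by
    constructor
    · intro x; exact Or.inl rfl
    · rintro x y (rfl | rfl)
      · exact Or.inl rfl
      · right; rw [nn]
    · rintro x y z (rfl | rfl) h
      · exact h
      · rcases h with rfl | rfl
        · exact Or.inr rfl
        · left; rw [nn]

/-- The quotient `L/{±1}`. -/
def V := Quotient (sr C)

def pi (x : α) : V C := Quotient.mk (sr C) x

lemma pi_surj : Function.Surjective (pi C) := Quotient.mk_surjective

lemma add_wd : ∀ (a b : α), (sr C).r a b → ∀ (c d : α), (sr C).r c d →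
    (sr C).r (C.mul a c) (C.mul b d) := by
  rintro a b (rfl | rfl) c d (rfl | rfl)
  · exact Or.inl rfl
  · right; rw [mul_neg_right]
  · right; rw [C.neg_mul_assoc₁]
  · left; rw [C.neg_mul_assoc₁, mul_neg_right, nn]

instance : Add (V C) := ⟨Quotient.map₂ C.mul (add_wd C)⟩
instance : Zero (V C) := ⟨pi C C.one⟩
instance : Neg (V C) := ⟨id⟩

instance : AddCommGroup (V C) where
  add := (· + ·)
  zero := 0
  neg := (- ·)
  nsmul := nsmulRec
  zsmul := zsmulRec
  add_assoc := by
    rintro ⟨x⟩ ⟨y⟩ ⟨z⟩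
    apply Quotient.sound
    rcases C.assoc_mem x y z with h | h
    · exact Or.inl h.symm
    · right
      rw [h, ← C.neg_mul_comm (C.mul x (C.mul y z)), nn]
  zero_add := by
    rintro ⟨x⟩
    apply Quotient.sound
    left; rw [C.one_mul]
  add_zero := by
    rintro ⟨x⟩
    apply Quotient.sound
    left; rw [C.mul_one]
  neg_add_cancel := by
    rintro ⟨x⟩
    apply Quotient.sound
    rcases C.square_mem x with h | h
    · left; exact h.symm
    · right; rw [h, C.neg_neg]
  add_comm := by
    rintro ⟨x⟩ ⟨y⟩
    apply Quotient.sound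
    rcases C.comm_mem y x with h | h
    · exact Or.inl h
    · right; rw [h, ← C.neg_mul_comm (C.mul x y)]

lemma pi_mul (x y : α) : pi C (C.mul x y) = pi C x + pi C y := rfl

lemma pi_one : pi C C.one = 0 := rfl

lemma pi_neg_mul (x : α) : pi C (C.mul C.neg x) = pi C x :=
  Quotient.sound (Or.inr (nn C x).symm)

lemma pi_negone : pi C C.neg = 0 := by
  rw [← C.mul_one C.neg, pi_neg_mul, pi_one]

lemma v_add_self (v : V C) : v + v = 0 := by
  obtain ⟨x, rfl⟩ := pi_surj C v
  rw [← pi_mul]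
  rcases C.square_mem x with h | h
  · rw [h, pi_one]
  · rw [h, pi_negone]

lemma v_eq_of_add_eq_zero {v w : V C} (h : v + w = 0) : w = v := by
  have := congrArg (fun u => v + u) h
  simp only [← add_assoc, v_add_self, zero_add, add_zero] at this
  exact this

instance : Module (ZMod 2) (V C) := AddCommGroup.zmodModule (by
  intro x; rw [two_nsmul]; exact v_add_self C x)

instance : Finite (V C) := by
  have := C.finite
  exact Quotient.finite _

lemma pi_rel {x g : α} (h : pi C g = pi C x) : x = g ∨ x = C.mul C.neg g :=
  Quotient.exact h

end CodeLoopAux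

namespace CodeLoopAux

open Submodule

variable {α : Type*} (C : CodeLoop α)

lemma gen_subset_closed {X T : Set α} (hX : X ⊆ T) (hT : C.toLoopStr.IsClosed T) :
    C.gen X ⊆ T := Set.sInter_subset_of_mem ⟨hX, hT⟩

lemma subset_gen (X : Set α) : X ⊆ C.gen X := by
  intro x hx
  rw [LoopStr.gen, Set.mem_sInter]
  exact fun T hT => hT.1 hx

lemma mem_gen {X : Set α} {x : α} :
    x ∈ C.gen X ↔ ∀ T, X ⊆ T → C.toLoopStr.IsClosed T → x ∈ T := by
  rw [LoopStr.gen, Set.mem_sInter]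
  exact ⟨fun h T h1 h2 => h T ⟨h1, h2⟩, fun h T hT => h T hT.1 hT.2⟩

lemma gen_closed (X : Set α) : C.toLoopStr.IsClosed (C.gen X) := by
  refine ⟨?_, ?_, ?_, ?_⟩
  · exact (mem_gen C).2 fun T _ hT => hT.1
  · intro x hx y hy
    exact (mem_gen C).2 fun T h1 h2 =>
      h2.2.1 x ((mem_gen C).1 hx T h1 h2) y ((mem_gen C).1 hy T h1 h2)
  · intro x hx y hxy
    exact (mem_gen C).2 fun T h1 h2 => h2.2.2.1 x ((mem_gen C).1 hx T h1 h2) y hxy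
  · intro x hx y hxy
    exact (mem_gen C).2 fun T h1 h2 => h2.2.2.2 x ((mem_gen C).1 hx T h1 h2) y hxy

lemma span_of_generates {X : Set α} (h : C.Generates X) :
    span (ZMod 2) (pi C '' X) = ⊤ := by
  set W : Set α := {x | pi C x ∈ span (ZMod 2) (pi C '' X)} with hW
  have hclosed : C.toLoopStr.IsClosed W := by
    refine ⟨?_, ?_, ?_, ?_⟩
    · show pi C C.one ∈ span (ZMod 2) (pi C '' X)
      rw [pi_one]; exact zero_mem _
    · intro x hx y hy
      show pi C (C.mul x y) ∈ span (ZMod 2) (pi C '' X)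
      rw [pi_mul]; exact add_mem hx hy
    · intro x hx y hxy
      show pi C y ∈ span (ZMod 2) (pi C '' X)
      have : pi C x + pi C y = 0 := by rw [← pi_mul, hxy, pi_one]
      rw [v_eq_of_add_eq_zero C this]; exact hx
    · intro x hx y hxy
      show pi C y ∈ span (ZMod 2) (pi C '' X)
      have h0 : pi C y + pi C x = 0 := by rw [← pi_mul, hxy, pi_one]
      rw [add_comm] at h0
      rw [v_eq_of_add_eq_zero C h0]; exact hx
  have hsub : X ⊆ W := fun x hx =>
    Submodule.subset_span (Set.mem_image_of_mem _ hx)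
  have huniv : Set.univ ⊆ W := by
    rw [← h]; exact gen_subset_closed C hsub hclosed
  rw [eq_top_iff]
  rintro v -
  obtain ⟨x, rfl⟩ := pi_surj C v
  exact huniv (Set.mem_univ x)

lemma exists_lift_of_mem_span {X : Set α} {v : V C}
    (hv : v ∈ span (ZMod 2) (pi C '' X)) : ∃ g ∈ C.gen X, pi C g = v := by
  induction hv using Submodule.span_induction with
  | mem x hx =>
    obtain ⟨g, hg, rfl⟩ := hx
    exact ⟨g, subset_gen C X hg, rfl⟩
  | zero => exact ⟨C.one, (gen_closed C X).1, pi_one C⟩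
  | add x y hx hy ihx ihy =>
    obtain ⟨g, hg, rfl⟩ := ihx
    obtain ⟨g', hg', rfl⟩ := ihy
    exact ⟨C.mul g g', (gen_closed C X).2.1 g hg g' hg', pi_mul C g g'⟩
  | smul c x hx ih =>
    obtain ⟨g, hg, rfl⟩ := ih
    by_cases hc : c = 0
    · exact ⟨C.one, (gen_closed C X).1, by rw [hc, zero_smul, pi_one]⟩
    · have hc1 : c = 1 := by revert hc; revert c; decide
      exact ⟨g, hg, by rw [hc1, one_smul]⟩

lemma generates_of_span {X : Set α} (h : span (ZMod 2) (pi C '' X) = ⊤) :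
    C.Generates X := by
  have key : ∀ x : α, ∃ g ∈ C.gen X, pi C g = pi C x := by
    intro x
    exact exists_lift_of_mem_span C (by rw [h]; trivial)
  have hn : C.neg ∈ C.gen X := by
    by_contra hn
    obtain ⟨a, ha⟩ := C.neg_is_square
    obtain ⟨g, hg, hga⟩ := key a
    have hg2 : C.mul g g = C.one := by
      rcases C.square_mem g with h2 | h2
      · exact h2
      · exact absurd ((gen_closed C X).2.1 g hg g hg) (by rw [h2]; exact hn)
    rcases pi_rel C hga with rfl | rfl
    · exact C.neg_ne_one (by rw [← ha, hg2])
    · apply C.neg_ne_one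
      rw [← ha, C.neg_mul_assoc₁, mul_neg_right, hg2, C.mul_one, C.neg_neg]
  rw [LoopStr.Generates, Set.eq_univ_iff_forall]
  intro x
  obtain ⟨g, hg, hgx⟩ := key x
  rcases pi_rel C hgx with rfl | rfl
  · exact hg
  · exact (gen_closed C X).2.1 C.neg hn g hg

end CodeLoopAux

namespace CodeLoopAux

open Submodule

variable {α : Type*} (C : CodeLoop α)

lemma span_diff {B : Set α} (hB : C.toLoopStr.IsBasis B) {b : α} (hb : b ∈ B)
    (h : pi C b ∈ span (ZMod 2) (pi C '' (B \ {b}))) : False := by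
  have hspan : span (ZMod 2) (pi C '' B) = ⊤ := span_of_generates C hB.1
  have htop : span (ZMod 2) (pi C '' (B \ {b})) = ⊤ := by
    rw [eq_top_iff, ← hspan, span_le]
    rintro _ ⟨c, hc, rfl⟩
    by_cases hcb : c = b
    · subst hcb; exact h
    · exact subset_span ⟨c, ⟨hc, hcb⟩, rfl⟩
  exact hB.2 (B \ {b}) (Set.sdiff_singleton_ssubset.mpr hb) (generates_of_span C htop)

lemma b_indep {B : Set α} (hB : C.toLoopStr.IsBasis B) :
    LinearIndependent (ZMod 2) (fun b : B => pi C (b : α)) := by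
  rw [linearIndependent_iff_notMem_span]
  rintro ⟨b, hb⟩ hmem
  apply span_diff C hB hb
  refine span_mono ?_ hmem
  rintro _ ⟨⟨c, hc⟩, ⟨-, hne⟩, rfl⟩
  refine ⟨c, ⟨hc, fun hcb => hne ?_⟩, rfl⟩
  simp only [Set.mem_singleton_iff] at hcb ⊢
  exact Subtype.ext hcb

noncomputable def bBasis {B : Set α} (hB : C.toLoopStr.IsBasis B) :
    Module.Basis ↥B (ZMod 2) (V C) :=
  Module.Basis.mk (b_indep C hB) (by
    rw [← Set.image_eq_range, span_of_generates C hB.1])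

lemma bBasis_apply {B : Set α} (hB : C.toLoopStr.IsBasis B) (b : ↥B) :
    bBasis C hB b = pi C (b : α) := Module.Basis.mk_apply _ _ _

end CodeLoopAux

namespace CodeLoopAux

variable {α : Type*} (C : CodeLoop α)

lemma ha_one {f : α → α} (hf : C.toLoopStr.IsHalfAut f) : f C.one = C.one := by
  have h := hf.2 C.one C.one
  rw [C.one_mul] at h
  have h1 : f C.one = C.mul (f C.one) (f C.one) := by rcases h with h | h <;> exact h
  apply lcancel C (a := f C.one)
  rw [← h1, C.mul_one]

lemma ha_neg {f : α → α} (hf : C.toLoopStr.IsHalfAut f) : f C.neg = C.neg := by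
  obtain ⟨a, ha⟩ := C.neg_is_square
  have h := hf.2 a a
  rw [ha] at h
  have h1 : f C.neg = C.mul (f a) (f a) := by rcases h with h | h <;> exact h
  rcases C.square_mem (f a) with h2 | h2
  · exfalso
    apply C.neg_ne_one
    apply hf.1.1
    rw [ha_one C hf, h1, h2]
  · rw [h1, h2]

lemma ha_neg_mul {f : α → α} (hf : C.toLoopStr.IsHalfAut f) (x : α) :
    f (C.mul C.neg x) = C.mul C.neg (f x) := by
  rcases hf.2 C.neg x with h | h
  · rw [h, ha_neg C hf]
  · rw [h, ha_neg C hf, C.neg_mul_comm]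

lemma ha_comp {f g : α → α} (hf : C.toLoopStr.IsHalfAut f)
    (hg : C.toLoopStr.IsHalfAut g) : C.toLoopStr.IsHalfAut (f ∘ g) := by
  refine ⟨hf.1.comp hg.1, fun x y => ?_⟩
  show f (g (C.mul x y)) = _ ∨ f (g (C.mul x y)) = _
  rcases hg.2 x y with h | h <;> rw [h] <;> rcases hf.2 (g x) (g y) with h' | h' <;>
    rcases hf.2 (g y) (g x) with h'' | h'' <;> simp [h', h'']

lemma ha_id : C.toLoopStr.IsHalfAut id := ⟨Function.bijective_id, fun x y => Or.inl rfl⟩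

/-- multiplication of sign-ambiguous elements -/
lemma sign_mul_sign {u v x y : α} (hu : u = x ∨ u = C.mul C.neg x)
    (hv : v = y ∨ v = C.mul C.neg y) :
    C.mul u v = C.mul x y ∨ C.mul u v = C.mul C.neg (C.mul x y) := by
  rcases hu with rfl | rfl <;> rcases hv with rfl | rfl
  · exact Or.inl rfl
  · right; rw [mul_neg_right]
  · right; rw [C.neg_mul_assoc₁]
  · left; rw [C.neg_mul_assoc₁, mul_neg_right, nn]

/-- the right-inverse-closure workhorse -/
lemma ha_inv_step {f : α → α} (hf : C.toLoopStr.IsHalfAut f) {x y : α}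
    (hx : f x = x ∨ f x = C.mul C.neg x) (hxy : C.mul x y = C.one) :
    f y = y ∨ f y = C.mul C.neg y := by
  have h1 : C.mul (f x) (f y) = C.one := by
    rcases hf.2 x y with h | h
    · rw [← h, hxy, ha_one C hf]
    · apply inv_symm C
      rw [← h, hxy, ha_one C hf]
  rcases hx with hx | hx
  · left
    apply lcancel C (a := x)
    rw [← hx] at hxy ⊢
    rw [h1, hxy]
  · right
    rw [hx] at h1
    rw [C.neg_mul_assoc₁] at h1
    -- h1 : neg * (x * f y) = 1
    have h2 : C.mul C.neg (C.mul x (C.mul C.neg y)) = C.one := by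
      rw [mul_neg_right, hxy, C.mul_one, C.neg_neg]
    apply lcancel C (a := x)
    apply lcancel C (a := C.neg)
    rw [h1, h2]

lemma ha_sign {B : Set α} (hB : C.toLoopStr.IsBasis B) {f : α → α}
    (hf : C.toLoopStr.IsHalfAut f) (hfix : ∀ b ∈ B, f b = b) (x : α) :
    f x = x ∨ f x = C.mul C.neg x := by
  set F : Set α := {x | f x = x ∨ f x = C.mul C.neg x} with hF
  have hclosed : C.toLoopStr.IsClosed F := by
    refine ⟨Or.inl (ha_one C hf), ?_, ?_, ?_⟩
    · intro a ha b hb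
      show f (C.mul a b) = _ ∨ f (C.mul a b) = _
      rcases hf.2 a b with h | h
      · rw [h]; exact sign_mul_sign C ha hb
      · rw [h]
        rcases sign_mul_sign C hb ha with h' | h' <;> rw [h'] <;>
          rcases C.comm_mem b a with h'' | h''
        · rw [h'']; exact Or.inl rfl
        · rw [h'', ← C.neg_mul_comm]; exact Or.inr rfl
        · rw [h'']; exact Or.inr rfl
        · rw [h'', ← C.neg_mul_comm (C.mul a b), nn]; exact Or.inl rfl
    · intro a ha b hab
      exact ha_inv_step C hf ha hab
    · intro a ha b hab
      exact ha_inv_step C hf ha (inv_symm C hab)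
  have : Set.univ ⊆ F := by
    rw [← hB.1]
    exact gen_subset_closed C (fun b hb => Or.inl (hfix b hb)) hclosed
  exact this (Set.mem_univ x)

end CodeLoopAux

namespace CodeLoopAux

open scoped Classical

variable {α : Type*} (C : CodeLoop α)

lemma zmod2_cases (c : ZMod 2) : c = 0 ∨ c = 1 := by revert c; decide

/-- The set of sign-twist half-automorphisms. -/
def ESet : Set (α → α) :=
  {f | C.toLoopStr.IsHalfAut f ∧ ∀ x, f x = x ∨ f x = C.mul C.neg x}

section SectionMap

variable {B : Set α} (hB : C.toLoopStr.IsBasis B)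

noncomputable def phiMap (s : ↥B → ZMod 2) : V C →ₗ[ZMod 2] ZMod 2 :=
  (bBasis C hB).constr ℕ s

lemma phiMap_basis (s : ↥B → ZMod 2) (b : ↥B) : phiMap C hB s (pi C (b : α)) = s b := by
  rw [← bBasis_apply C hB b]
  exact Module.Basis.constr_basis _ _ _ _

noncomputable def secf (s : ↥B → ZMod 2) : α → α :=
  fun x => if phiMap C hB s (pi C x) = 0 then x else C.mul C.neg x

lemma secf_sign (s : ↥B → ZMod 2) (x : α) :
    secf C hB s x = x ∨ secf C hB s x = C.mul C.neg x := by
  unfold secf; split <;> [exact Or.inl rfl; exact Or.inr rfl]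

lemma secf_aut (s : ↥B → ZMod 2) (x y : α) :
    secf C hB s (C.mul x y) = C.mul (secf C hB s x) (secf C hB s y) := by
  unfold secf
  rw [pi_mul, map_add]
  rcases zmod2_cases (phiMap C hB s (pi C x)) with hx | hx <;>
    rcases zmod2_cases (phiMap C hB s (pi C y)) with hy | hy <;>
      rw [hx, hy]
  · rw [if_pos (by decide), if_pos rfl, if_pos rfl]
  · rw [if_neg (by decide), if_pos rfl, if_neg (by decide), mul_neg_right]
  · rw [if_neg (by decide), if_neg (by decide), if_pos rfl, C.neg_mul_assoc₁]
  · rw [show ((1 : ZMod 2) + 1) = 0 from by decide, if_pos rfl, if_neg (by decide),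
      if_neg (by decide), C.neg_mul_assoc₁, mul_neg_right, nn]

lemma secf_invol (s : ↥B → ZMod 2) (x : α) : secf C hB s (secf C hB s x) = x := by
  unfold secf
  by_cases h : phiMap C hB s (pi C x) = 0
  · rw [if_pos h, if_pos h]
  · rw [if_neg h, pi_neg_mul, if_neg h, nn]

lemma secf_halfaut (s : ↥B → ZMod 2) : C.toLoopStr.IsHalfAut (secf C hB s) :=
  ⟨Function.Involutive.bijective (secf_invol C hB s),
   fun x y => Or.inl (secf_aut C hB s x y)⟩

lemma secf_mem (s : ↥B → ZMod 2) : secf C hB s ∈ ESet C :=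
  ⟨secf_halfaut C hB s, secf_sign C hB s⟩

lemma secf_basis (s : ↥B → ZMod 2) (b : ↥B) :
    secf C hB s (b : α) = if s b = 0 then (b : α) else C.mul C.neg b := by
  unfold secf
  rw [phiMap_basis]

end SectionMap

/-- restriction to a basis, as ±1 data -/
noncomputable def resf (B : Set α) (f : α → α) : ↥B → ZMod 2 :=
  fun b => if f (b : α) = (b : α) then 0 else 1

section Count

variable {B : Set α} (hB : C.toLoopStr.IsBasis B)

/-- `E ≃ (B → ZMod 2) × H_B`. -/
noncomputable def countEquiv :
    ↥(ESet C) ≃ ((↥B → ZMod 2) ×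
      {f : α → α // C.toLoopStr.IsHalfAut f ∧ ∀ b ∈ B, f b = b}) where
  toFun f := ⟨resf B f.1, ⟨f.1 ∘ secf C hB (resf B f.1),
    ha_comp C f.2.1 (secf_halfaut C hB _), by
      intro b hb
      show f.1 (secf C hB (resf B f.1) b) = b
      rw [secf_basis C hB _ ⟨b, hb⟩]
      rcases f.2.2 b with hfb | hfb
      · rw [if_pos (by unfold resf; rw [if_pos hfb]), hfb]
      · have hne : f.1 b ≠ b := by rw [hfb]; exact neg_mul_ne C b
        rw [if_neg (by unfold resf; rw [if_neg hne]; exact one_ne_zero),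
          ha_neg_mul C f.2.1, hfb, nn]⟩⟩
  invFun p := ⟨p.2.1 ∘ secf C hB p.1, ha_comp C p.2.2.1 (secf_halfaut C hB _), by
    intro x
    show p.2.1 (secf C hB p.1 x) = x ∨ p.2.1 (secf C hB p.1 x) = C.mul C.neg x
    rcases secf_sign C hB p.1 x with hs | hs <;> rw [hs]
    · exact ha_sign C hB p.2.2.1 p.2.2.2 x
    · rw [ha_neg_mul C p.2.2.1]
      rcases ha_sign C hB p.2.2.1 p.2.2.2 x with h | h <;> rw [h]
      · exact Or.inr rfl
      · left; rw [nn]⟩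
  left_inv f := by
    apply Subtype.ext
    funext x
    show f.1 (secf C hB _ (secf C hB _ x)) = f.1 x
    rw [secf_invol]
  right_inv p := by
    have hres : resf B (p.2.1 ∘ secf C hB p.1) = p.1 := by
      funext b
      unfold resf
      show (if p.2.1 (secf C hB p.1 b) = (b : α) then (0 : ZMod 2) else 1) = p.1 b
      rw [secf_basis C hB p.1 b]
      rcases zmod2_cases (p.1 b) with h1 | h1 <;> rw [h1]
      · rw [if_pos rfl, if_pos (p.2.2.2 b b.2)]
      · rw [if_neg one_ne_zero]
        have : p.2.1 (C.mul C.neg b) = C.mul C.neg (b : α) := by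
          rw [ha_neg_mul C p.2.2.1, p.2.2.2 b b.2]
        rw [if_neg (by rw [this]; exact neg_mul_ne C b)]
    have h2 : (p.2.1 ∘ secf C hB p.1) ∘ secf C hB (resf B (p.2.1 ∘ secf C hB p.1))
        = p.2.1 := by
      rw [hres]
      funext x
      show p.2.1 (secf C hB p.1 (secf C hB p.1 x)) = p.2.1 x
      rw [secf_invol]
    exact Prod.ext hres (Subtype.ext h2)

end Count

end CodeLoopAux

namespace CodeLoopAux

variable {α : Type*} (C : CodeLoop α)

abbrev HB (B : Set α) := {f : α → α // C.toLoopStr.IsHalfAut f ∧ ∀ b ∈ B, f b = b}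

noncomputable def hbGroup {B : Set α} (hB : C.toLoopStr.IsBasis B) :
    AddCommGroup (HB C B) :=
  letI : Add (HB C B) := ⟨fun f g => ⟨f.1 ∘ g.1, ha_comp C f.2.1 g.2.1, fun b hb => by
    show f.1 (g.1 b) = b
    rw [g.2.2 b hb, f.2.2 b hb]⟩⟩
  letI : Zero (HB C B) := ⟨⟨id, ha_id C, fun _ _ => rfl⟩⟩
  letI : Neg (HB C B) := ⟨id⟩
  { add := (· + ·), zero := 0, neg := (- ·),
    nsmul := nsmulRec, zsmul := zsmulRec,
    add_assoc := fun f g h => Subtype.ext rfl,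
    zero_add := fun f => Subtype.ext rfl,
    add_zero := fun f => Subtype.ext rfl,
    neg_add_cancel := fun f => Subtype.ext (by
      funext x
      show f.1 (f.1 x) = id x
      rcases ha_sign C hB f.2.1 f.2.2 x with h | h
      · rw [h, h]; rfl
      · rw [h, ha_neg_mul C f.2.1, h, nn]; rfl),
    add_comm := fun f g => Subtype.ext (by
      funext x
      show f.1 (g.1 x) = g.1 (f.1 x)
      rcases ha_sign C hB g.2.1 g.2.2 x with hg | hg <;>
        rcases ha_sign C hB f.2.1 f.2.2 x with hf | hf <;>
          simp only [hg, hf, ha_neg_mul C f.2.1, ha_neg_mul C g.2.1, nn]) }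

theorem main {B B₁ : Set α} (hB : C.toLoopStr.IsBasis B)
    (hB₁ : C.toLoopStr.IsBasis B₁) :
    ∃ e : HB C B ≃ HB C B₁,
      ∀ φ ψ ρ : HB C B,
        (φ : α → α) ∘ (ψ : α → α) = (ρ : α → α) →
          ((e φ : α → α)) ∘ ((e ψ : α → α)) = ((e ρ : α → α)) := by
  classical
  letI := C.finite
  have hcard : Nat.card (HB C B) = Nat.card (HB C B₁) := by
    have hE1 : Nat.card ↥(ESet C) = Nat.card (↥B → ZMod 2) * Nat.card (HB C B) := by
      rw [Nat.card_congr (countEquiv C hB), Nat.card_prod]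
    have hE2 : Nat.card ↥(ESet C) = Nat.card (↥B₁ → ZMod 2) * Nat.card (HB C B₁) := by
      rw [Nat.card_congr (countEquiv C hB₁), Nat.card_prod]
    have hBB : Nat.card (↥B → ZMod 2) = Nat.card (↥B₁ → ZMod 2) :=
      Nat.card_congr
        (Equiv.arrowCongr (Module.Basis.indexEquiv (bBasis C hB) (bBasis C hB₁)) (Equiv.refl _))
    have hpos : 0 < Nat.card (↥B₁ → ZMod 2) := Nat.card_pos
    rw [hBB] at hE1
    exact Nat.eq_of_mul_eq_mul_left hpos (hE1.symm.trans hE2)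
  letI G1 := hbGroup C hB
  letI G2 := hbGroup C hB₁
  letI M1 : Module (ZMod 2) (HB C B) :=
    AddCommGroup.zmodModule (fun f => by rw [two_nsmul]; exact neg_add_cancel f)
  letI M2 : Module (ZMod 2) (HB C B₁) :=
    AddCommGroup.zmodModule (fun f => by rw [two_nsmul]; exact neg_add_cancel f)
  letI : Fintype (HB C B) := Fintype.ofFinite _
  letI : Fintype (HB C B₁) := Fintype.ofFinite _
  have f1 : Fintype.card (HB C B) = 2 ^ Module.finrank (ZMod 2) (HB C B) := by
    have := Module.card_eq_pow_finrank (K := ZMod 2) (V := HB C B)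
    rwa [ZMod.card] at this
  have f2 : Fintype.card (HB C B₁) = 2 ^ Module.finrank (ZMod 2) (HB C B₁) := by
    have := Module.card_eq_pow_finrank (K := ZMod 2) (V := HB C B₁)
    rwa [ZMod.card] at this
  have hfr : Module.finrank (ZMod 2) (HB C B) = Module.finrank (ZMod 2) (HB C B₁) := by
    apply Nat.pow_right_injective (le_refl 2)
    show 2 ^ Module.finrank (ZMod 2) (HB C B) = 2 ^ Module.finrank (ZMod 2) (HB C B₁)
    rw [← f1, ← f2, ← Nat.card_eq_fintype_card, ← Nat.card_eq_fintype_card]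
    exact hcard
  let L := LinearEquiv.ofFinrankEq (R := ZMod 2) (HB C B) (HB C B₁) hfr
  refine ⟨L.toEquiv, ?_⟩
  intro φ ψ ρ h
  have hadd : φ + ψ = ρ := Subtype.ext h
  have hmap : L ρ = L φ + L ψ := by rw [← hadd, map_add]
  show (L φ : α → α) ∘ (L ψ : α → α) = (L ρ : α → α)
  rw [hmap]
  rfl

end CodeLoopAux


/-- For two bases `B`, `B₁` of a code loop, the groups `H_B(L)` and `H_{B₁}(L)` are
isomorphic (in particular equinumerous): there is a bijection between them respecting
composition. -/
theorem stmt8 {α : Type*} (C : CodeLoop α) (B B₁ : Set α)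
    (hB : C.toLoopStr.IsBasis B) (hB₁ : C.toLoopStr.IsBasis B₁) :
    ∃ e : {f : α → α // C.toLoopStr.IsHalfAut f ∧ ∀ b ∈ B, f b = b} ≃
        {f : α → α // C.toLoopStr.IsHalfAut f ∧ ∀ b ∈ B₁, f b = b},
      ∀ φ ψ ρ : {f : α → α // C.toLoopStr.IsHalfAut f ∧ ∀ b ∈ B, f b = b},
        (φ : α → α) ∘ (ψ : α → α) = (ρ : α → α) →
          ((e φ : α → α)) ∘ ((e ψ : α → α)) = ((e ρ : α → α)) := by
  exact CodeLoopAux.main C hB hB₁
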